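/- (Hard case of Theorem 1, Rendl–Wolkowicz) Suppose a is orthogonal to the eigenspace of λmin(A) (the hard case), let i be the multiplicity of λmin(A), and set t0 := λmin(A) + aᵀ(A − λmin(A)·I)† a, where † is the Moore–Penrose pseudoinverse. Then: for t < t0, λmin(D(t)) < λmin(A) and λmin(D(t)) is a simple eigenvalue; for t = t0, λmin(D(t)) = λmin(A) and has multiplicity i + 1; and for t > t0, λmin(D(t)) = λmin(A) and has multiplicity i. -/

import Mathlib

open Matrix

/-- The smallest eigenvalue of a real (symmetric) matrix. -/
noncomputable def lambdaMin {ι : Type} [Fintype ι] (M : Matrix ι ι ℝ) : ℝ :=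
  sInf {μ : ℝ | ∃ v : ι → ℝ, v ≠ 0 ∧ M.mulVec v = μ • v}

/-- The multiplicity of the smallest eigenvalue: the dimension of Null(M - λmin(M)·I). -/
noncomputable def eigMult {ι : Type} [Fintype ι] [DecidableEq ι] (M : Matrix ι ι ℝ) : ℕ :=
  Module.finrank ℝ (LinearMap.ker (M - lambdaMin M • (1 : Matrix ι ι ℝ)).mulVecLin)

/-- The bordered matrix D(t) = [[t, -aᵀ],[-a, A]]. -/
noncomputable def borderD {n : ℕ} (A : Matrix (Fin n) (Fin n) ℝ) (a : Fin n → ℝ) (t : ℝ) :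
    Matrix (Unit ⊕ Fin n) (Unit ⊕ Fin n) ℝ :=
  Matrix.fromBlocks (Matrix.of fun (_ : Unit) (_ : Unit) => t)
    (Matrix.of fun (_ : Unit) (j : Fin n) => -a j)
    (Matrix.of fun (i : Fin n) (_ : Unit) => -a i) A

/-- The bordered matrix D(t,λ) = [[t, (-a + (λ/2)b)ᵀ],[-a + (λ/2)b, A]]. -/
noncomputable def borderD2 {n : ℕ} (A : Matrix (Fin n) (Fin n) ℝ) (a b : Fin n → ℝ)
    (t l : ℝ) : Matrix (Unit ⊕ Fin n) (Unit ⊕ Fin n) ℝ :=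
  borderD A (fun j => a j - (l / 2) * b j) t

/-- The objective xᵀAx - 2aᵀx. -/
noncomputable def objQ {n : ℕ} (A : Matrix (Fin n) (Fin n) ℝ) (a : Fin n → ℝ)
    (x : Fin n → ℝ) : ℝ :=
  x ⬝ᵥ A.mulVec x - 2 * (a ⬝ᵥ x)

/-- The optimal value p* of eTRS. -/
noncomputable def pstar {n : ℕ} (A : Matrix (Fin n) (Fin n) ℝ) (a b : Fin n → ℝ)
    (c Δ : ℝ) : ℝ :=
  sInf {v : ℝ | ∃ x : Fin n → ℝ, x ⬝ᵥ x ≤ Δ ∧ b ⬝ᵥ x ≤ c ∧ v = objQ A a x}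

/-- The Lagrangian of eTRS. -/
noncomputable def lagr {n : ℕ} (A : Matrix (Fin n) (Fin n) ℝ) (a b : Fin n → ℝ)
    (c Δ : ℝ) (x : Fin n → ℝ) (l1 l2 : ℝ) : ℝ :=
  objQ A a x + l1 * (x ⬝ᵥ x - Δ) + l2 * (b ⬝ᵥ x - c)

/-- The Lagrangian dual value d* of eTRS:
the supremum over λ1, λ2 ≥ 0 of inf_x of the Lagrangian, encoded as the supremum of all
values that are lower bounds of the Lagrangian for some admissible multipliers. -/
noncomputable def dstar {n : ℕ} (A : Matrix (Fin n) (Fin n) ℝ) (a b : Fin n → ℝ)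
    (c Δ : ℝ) : ℝ :=
  sSup {v : ℝ | ∃ l1 l2 : ℝ, 0 ≤ l1 ∧ 0 ≤ l2 ∧ ∀ x : Fin n → ℝ, v ≤ lagr A a b c Δ x l1 l2}

/-- x is a global optimal solution of eTRS. -/
def isOptimal {n : ℕ} (A : Matrix (Fin n) (Fin n) ℝ) (a b : Fin n → ℝ)
    (c Δ : ℝ) (x : Fin n → ℝ) : Prop :=
  x ⬝ᵥ x ≤ Δ ∧ b ⬝ᵥ x ≤ c ∧
    ∀ y : Fin n → ℝ, y ⬝ᵥ y ≤ Δ → b ⬝ᵥ y ≤ c → objQ A a x ≤ objQ A a y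

/-- The dual objective k(t,λ) = (Δ+1)·λmin(D(t,λ)) - t - λc. -/
noncomputable def ktl {n : ℕ} (A : Matrix (Fin n) (Fin n) ℝ) (a b : Fin n → ℝ)
    (c Δ : ℝ) (t l : ℝ) : ℝ :=
  (Δ + 1) * lambdaMin (borderD2 A a b t l) - t - l * c
open scoped RealInnerProductSpace

section Infra
variable {ι : Type} [Fintype ι] [DecidableEq ι] {M : Matrix ι ι ℝ}

/-- view a function as an element of Euclidean space -/
def toE {ι : Type} [Fintype ι] (x : ι → ℝ) : EuclideanSpace ℝ ι := WithLp.toLp 2 x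

lemma herm_dot (hM : M.IsHermitian) (x y : ι → ℝ) : (M *ᵥ x) ⬝ᵥ y = x ⬝ᵥ (M *ᵥ y) := by
  rw [dotProduct_mulVec, ← mulVec_transpose]
  congr 1
  conv_lhs => rw [← hM]
  ext i j
  simp [conjTranspose_apply, mulVec, transpose]

lemma dot_eucl (x y : ι → ℝ) : ⟪toE x, toE y⟫ = x ⬝ᵥ y := by
  simp [toE, PiLp.inner_apply, dotProduct, mul_comm]

lemma dot_eucl2 (x : EuclideanSpace ℝ ι) (y : ι → ℝ) : ⟪x, toE y⟫ = (x : ι → ℝ) ⬝ᵥ y := by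
  simp [toE, PiLp.inner_apply, dotProduct, mul_comm]

lemma eig_mem_range (hM : M.IsHermitian) {μ : ℝ} {v : ι → ℝ} (hv : v ≠ 0)
    (hMv : M *ᵥ v = μ • v) : ∃ i, hM.eigenvalues i = μ := by
  by_contra hcon
  push_neg at hcon
  apply hv
  have key : ∀ i, (⇑(hM.eigenvectorBasis i) : ι → ℝ) ⬝ᵥ v = 0 := by
    intro i
    have h1 : (⇑(hM.eigenvectorBasis i) : ι → ℝ) ⬝ᵥ (M *ᵥ v)
        = μ * (⇑(hM.eigenvectorBasis i) ⬝ᵥ v) := by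
      rw [hMv, dotProduct_smul]; rfl
    have h2 : (⇑(hM.eigenvectorBasis i) : ι → ℝ) ⬝ᵥ (M *ᵥ v)
        = hM.eigenvalues i * (⇑(hM.eigenvectorBasis i) ⬝ᵥ v) := by
      rw [← herm_dot hM, hM.mulVec_eigenvectorBasis, smul_dotProduct]; rfl
    have h3 := h2.symm.trans h1
    have hne : hM.eigenvalues i - μ ≠ 0 := sub_ne_zero.mpr (hcon i)
    have h4 : (hM.eigenvalues i - μ) * (⇑(hM.eigenvectorBasis i) ⬝ᵥ v) = 0 := by
      ring_nf; ring_nf at h3; linarith [h3]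
    exact (mul_eq_zero.mp h4).resolve_left hne
  have hz : toE v = 0 := by
    have hr := (hM.eigenvectorBasis).sum_repr (toE v)
    rw [← hr]
    apply Finset.sum_eq_zero
    intro i _
    rw [OrthonormalBasis.repr_apply_apply]
    have k := key i
    simp only [PiLp.inner_apply, toE, dotProduct, RCLike.inner_apply, conj_trivial,
      PiLp.toLp_apply] at k ⊢
    rw [Finset.sum_congr rfl (fun j _ => mul_comm (v j) _), k]
    simp
  exact congrArg WithLp.ofLp hz

lemma range_subset_eig (hM : M.IsHermitian) (i : ι) :
    ∃ v : ι → ℝ, v ≠ 0 ∧ M *ᵥ v = hM.eigenvalues i • v :=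
  ⟨⇑(hM.eigenvectorBasis i),
    fun h => hM.eigenvectorBasis.orthonormal.ne_zero i (by ext j; exact congrFun h j),
    hM.mulVec_eigenvectorBasis i⟩

lemma eigSet_eq (hM : M.IsHermitian) : {μ : ℝ | ∃ v : ι → ℝ, v ≠ 0 ∧ M.mulVec v = μ • v}
    = Set.range hM.eigenvalues := by
  ext μ
  constructor
  · rintro ⟨v, hv, hMv⟩
    exact eig_mem_range hM hv hMv
  · rintro ⟨i, rfl⟩
    exact range_subset_eig hM i

lemma lambdaMin_le (hM : M.IsHermitian) {μ : ℝ} {v : ι → ℝ} (hv : v ≠ 0)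
    (hMv : M *ᵥ v = μ • v) : lambdaMin M ≤ μ := by
  have hmem : μ ∈ {μ : ℝ | ∃ v : ι → ℝ, v ≠ 0 ∧ M.mulVec v = μ • v} := ⟨v, hv, hMv⟩
  have hbdd : BddBelow {μ : ℝ | ∃ v : ι → ℝ, v ≠ 0 ∧ M.mulVec v = μ • v} := by
    rw [eigSet_eq hM]
    exact (Set.finite_range _).bddBelow
  exact csInf_le hbdd hmem

lemma lambdaMin_mem (hM : M.IsHermitian) [Nonempty ι] :
    ∃ v : ι → ℝ, v ≠ 0 ∧ M *ᵥ v = lambdaMin M • v := by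
  have h : lambdaMin M ∈ {μ : ℝ | ∃ v : ι → ℝ, v ≠ 0 ∧ M.mulVec v = μ • v} := by
    unfold lambdaMin
    apply Set.Nonempty.csInf_mem
    · exact ⟨_, range_subset_eig hM (Classical.arbitrary ι)⟩
    · rw [eigSet_eq hM]; exact Set.finite_range _
  exact h

lemma eigdot (hM : M.IsHermitian) (x : ι → ℝ) (i : ι) :
    (⇑(hM.eigenvectorBasis i) : ι → ℝ) ⬝ᵥ (M *ᵥ x)
      = hM.eigenvalues i * (⇑(hM.eigenvectorBasis i) ⬝ᵥ x) := by
  rw [← herm_dot hM, hM.mulVec_eigenvectorBasis, smul_dotProduct]; rfl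

lemma parseval (hM : M.IsHermitian) (v y : ι → ℝ) :
    v ⬝ᵥ y = ∑ i, (⇑(hM.eigenvectorBasis i) ⬝ᵥ v) * (⇑(hM.eigenvectorBasis i) ⬝ᵥ y) := by
  rw [← dot_eucl v y, ← OrthonormalBasis.sum_inner_mul_inner hM.eigenvectorBasis]
  apply Finset.sum_congr rfl
  intro i _
  simp only [PiLp.inner_apply, toE, dotProduct, RCLike.inner_apply, conj_trivial,
    PiLp.toLp_apply]
  have e : ∑ x, v x * hM.eigenvectorBasis i x = ∑ x, hM.eigenvectorBasis i x * v x :=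
    Finset.sum_congr rfl (fun j _ => mul_comm _ _)
  rw [Finset.sum_congr rfl (fun j _ => mul_comm (y j) _)]

lemma lambdaMin_rayleigh (hM : M.IsHermitian) [Nonempty ι] (v : ι → ℝ) :
    lambdaMin M * (v ⬝ᵥ v) ≤ v ⬝ᵥ (M *ᵥ v) := by
  have hMv := eigdot hM v
  rw [parseval hM v (M *ᵥ v), parseval hM v v, Finset.mul_sum]
  apply Finset.sum_le_sum
  intro i _
  rw [hMv i]
  have h1 : lambdaMin M ≤ hM.eigenvalues i := by
    obtain ⟨u, hu, hMu⟩ := range_subset_eig hM i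
    exact lambdaMin_le hM hu hMu
  nlinarith [mul_self_nonneg (⇑(hM.eigenvectorBasis i) ⬝ᵥ v)]

end Infra
section Border
open Matrix
variable {n : ℕ} (A : Matrix (Fin n) (Fin n) ℝ) (a : Fin n → ℝ) (t : ℝ)

lemma borderD_herm (hA : A.IsHermitian) : (borderD A a t).IsHermitian := by
  unfold Matrix.IsHermitian
  ext i j
  rcases i with i | i <;> rcases j with j | j <;>
    simp [borderD, conjTranspose_apply] <;>
    exact congrFun (congrFun hA _) _

lemma borderD_mulVec_inl (v : Unit ⊕ Fin n → ℝ) :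
    (borderD A a t *ᵥ v) (Sum.inl ()) = t * v (Sum.inl ()) - a ⬝ᵥ (fun j => v (Sum.inr j)) := by
  simp [borderD, mulVec, dotProduct, Fintype.sum_sum_type, Finset.mul_sum, sub_eq_add_neg]

lemma borderD_mulVec_inr (v : Unit ⊕ Fin n → ℝ) (i : Fin n) :
    (borderD A a t *ᵥ v) (Sum.inr i)
      = -(a i * v (Sum.inl ())) + (A *ᵥ fun j => v (Sum.inr j)) i := by
  simp [borderD, mulVec, dotProduct, Fintype.sum_sum_type]

lemma mem_ker_iff {ι : Type} [Fintype ι] [DecidableEq ι] (M : Matrix ι ι ℝ) (μ : ℝ)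
    (V : ι → ℝ) : V ∈ LinearMap.ker (M - μ • (1 : Matrix ι ι ℝ)).mulVecLin ↔ M *ᵥ V = μ • V := by
  rw [LinearMap.mem_ker, mulVecLin_apply, sub_mulVec, smul_mulVec, one_mulVec, sub_eq_zero]

/-- the eigen-equations of the bordered matrix, componentwise -/
lemma borderD_eig_iff (μ : ℝ) (V : Unit ⊕ Fin n → ℝ) :
    borderD A a t *ᵥ V = μ • V ↔
      (t * V (Sum.inl ()) - a ⬝ᵥ (fun j => V (Sum.inr j)) = μ * V (Sum.inl ()) ∧
       A *ᵥ (fun j => V (Sum.inr j)) = μ • (fun j => V (Sum.inr j)) + V (Sum.inl ()) • a) := by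
  constructor
  · intro h
    constructor
    · have := congrFun h (Sum.inl ())
      rwa [borderD_mulVec_inl] at this
    · funext i
      have := congrFun h (Sum.inr i)
      rw [borderD_mulVec_inr] at this
      simp only [Pi.smul_apply, smul_eq_mul] at this
      simp only [Pi.smul_apply, Pi.add_apply, smul_eq_mul]
      rw [← this]; ring
  · rintro ⟨h1, h2⟩
    funext z
    rcases z with z | i
    · rw [borderD_mulVec_inl]; simpa using h1
    · rw [borderD_mulVec_inr]
      have := congrFun h2 i
      simp only [Pi.smul_apply, Pi.add_apply, smul_eq_mul] at this ⊢
      rw [this]; ring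

end Border

section Key
open Matrix

lemma eig_below_forces_t_lt {n : ℕ} (hn : 1 ≤ n) (A : Matrix (Fin n) (Fin n) ℝ)
    (hA : A.IsHermitian) (a : Fin n → ℝ)
    (hhard : ∀ v : Fin n → ℝ, A.mulVec v = lambdaMin A • v → a ⬝ᵥ v = 0)
    (w : Fin n → ℝ) (hw : (A - lambdaMin A • (1 : Matrix (Fin n) (Fin n) ℝ)).mulVec w = a)
    {t μ : ℝ} {V : Unit ⊕ Fin n → ℝ} (hV : V ≠ 0)
    (heig : borderD A a t *ᵥ V = μ • V) (hμ : μ < lambdaMin A) :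
    t < lambdaMin A + a ⬝ᵥ w := by
  have hNe : Nonempty (Fin n) := ⟨⟨0, hn⟩⟩
  set lam := lambdaMin A with hlamdef
  obtain ⟨h1, h2⟩ := (borderD_eig_iff A a t μ V).mp heig
  set s := V (Sum.inl ()) with hs
  set x : Fin n → ℝ := fun j => V (Sum.inr j) with hx
  -- case s = 0 impossible
  by_cases hs0 : s = 0
  · exfalso
    have hAx : A *ᵥ x = μ • x := by rw [h2, hs0]; simp
    have hx0 : x ≠ 0 := by
      intro h
      apply hV
      funext z
      rcases z with z | i
      · cases z; exact hs0
      · exact congrFun h i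
    have := lambdaMin_le hA hx0 hAx
    linarith
  -- main case
  set b := hA.eigenvectorBasis with hb
  set α := hA.eigenvalues with halpha
  set c : Fin n → ℝ := fun i => (⇑(b i) : Fin n → ℝ) ⬝ᵥ a with hc
  set d : Fin n → ℝ := fun i => (⇑(b i) : Fin n → ℝ) ⬝ᵥ x with hd
  set ww : Fin n → ℝ := fun i => (⇑(b i) : Fin n → ℝ) ⬝ᵥ w with hww
  have f1 : ∀ i, lam ≤ α i := by
    intro i
    obtain ⟨u, hu, hMu⟩ := range_subset_eig hA i
    exact lambdaMin_le hA hu hMu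
  have f2 : ∀ i, (α i - μ) * d i = s * c i := by
    intro i
    have e1 : (⇑(b i) : Fin n → ℝ) ⬝ᵥ (A *ᵥ x) = α i * d i := eigdot hA x i
    have e2 : (⇑(b i) : Fin n → ℝ) ⬝ᵥ (A *ᵥ x) = μ * d i + s * c i := by
      rw [h2, dotProduct_add, dotProduct_smul, dotProduct_smul, hc, hd]
      simp [smul_eq_mul]
    rw [e2] at e1
    linarith [e1]
  have f3 : ∀ i, c i = (α i - lam) * ww i := by
    intro i
    have e1 : (⇑(b i) : Fin n → ℝ) ⬝ᵥ ((A - lam • (1 : Matrix (Fin n) (Fin n) ℝ)) *ᵥ w)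
        = α i * ww i - lam * ww i := by
      rw [sub_mulVec, smul_mulVec, one_mulVec, dotProduct_sub, dotProduct_smul,
        eigdot hA w i]
      simp [smul_eq_mul, hww]; rfl
    rw [hw] at e1
    show (⇑(b i) : Fin n → ℝ) ⬝ᵥ a = (α i - lam) * ww i
    rw [e1]; ring
  have f4 : ∀ i, α i = lam → c i = 0 := by
    intro i hi
    have hbi : A *ᵥ (⇑(b i) : Fin n → ℝ) = lam • ⇑(b i) := by
      rw [← hi]; exact hA.mulVec_eigenvectorBasis i
    have h5 := hhard _ hbi
    show (⇑(b i) : Fin n → ℝ) ⬝ᵥ a = 0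
    rw [dotProduct_comm]
    exact h5
  have hpos : ∀ i, 0 < α i - μ := fun i => by linarith [f1 i]
  have hdi : ∀ i, c i * d i = s * (c i ^ 2 / (α i - μ)) := by
    intro i
    have hne := (hpos i).ne'
    have hd2 : d i = s * c i / (α i - μ) := by
      rw [eq_div_iff hne, mul_comm]
      exact f2 i
    rw [hd2]; ring
  have hax : a ⬝ᵥ x = s * ∑ i, c i ^ 2 / (α i - μ) := by
    rw [parseval hA a x, Finset.mul_sum]
    exact Finset.sum_congr rfl fun i _ => hdi i
  have haw : a ⬝ᵥ w = ∑ i, c i * ww i := parseval hA a w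
  have hterm : ∀ i, c i ^ 2 / (α i - μ) ≤ c i * ww i := by
    intro i
    by_cases hci : α i = lam
    · rw [f4 i hci]
      simp
    · have hgt : lam < α i := lt_of_le_of_ne (f1 i) (Ne.symm hci)
      have h3 := f3 i
      have hne : α i - lam ≠ 0 := by linarith
      have hwwi : ww i = c i / (α i - lam) := by
        rw [h3]; field_simp
      calc c i ^ 2 / (α i - μ) ≤ c i ^ 2 / (α i - lam) :=
            div_le_div_of_nonneg_left (sq_nonneg _) (by linarith) (by linarith)
        _ = c i * ww i := by rw [hwwi]; ring
  set S := ∑ i, c i ^ 2 / (α i - μ) with hSdef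
  rw [hax] at h1
  have h6 : s * t = s * (μ + S) := by ring_nf; ring_nf at h1; linarith
  have h7 : t = μ + S := mul_left_cancel₀ hs0 h6
  have h8 : S ≤ a ⬝ᵥ w := by
    rw [haw]
    exact Finset.sum_le_sum fun i _ => hterm i
  linarith

end Key

section Mult
open Matrix

noncomputable def eigMult' {ι : Type} [Fintype ι] [DecidableEq ι] (M : Matrix ι ι ℝ) : ℕ :=
  Module.finrank ℝ (LinearMap.ker (M - lambdaMin M • (1 : Matrix ι ι ℝ)).mulVecLin)

variable {n : ℕ}

/-- extension by zero in the first coordinate -/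
def extR (n : ℕ) : (Fin n → ℝ) →ₗ[ℝ] (Unit ⊕ Fin n → ℝ) where
  toFun x := Sum.elim 0 x
  map_add' x y := by funext z; cases z <;> simp
  map_smul' c x := by funext z; cases z <;> simp

/-- V ↦ (V ∘ inr) - V(inl) • w -/
def subW (n : ℕ) (w : Fin n → ℝ) : (Unit ⊕ Fin n → ℝ) →ₗ[ℝ] (Fin n → ℝ) where
  toFun V := (fun j => V (Sum.inr j)) - V (Sum.inl ()) • w
  map_add' x y := by funext j; simp [Pi.sub_apply]; ring
  map_smul' c x := by funext j; simp [Pi.sub_apply]; ring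

/-- (s, z) ↦ Sum.elim s (s•w + z) -/
def addW (n : ℕ) (w : Fin n → ℝ) : (ℝ × (Fin n → ℝ)) →ₗ[ℝ] (Unit ⊕ Fin n → ℝ) where
  toFun p := Sum.elim (fun _ => p.1) (p.1 • w + p.2)
  map_add' x y := by funext z; cases z <;> simp <;> ring
  map_smul' c x := by funext z; cases z <;> simp <;> ring

lemma sub_smul_one_herm {A : Matrix (Fin n) (Fin n) ℝ} (hA : A.IsHermitian) (lam : ℝ) :
    (A - lam • (1 : Matrix (Fin n) (Fin n) ℝ)).IsHermitian := by
  apply hA.sub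
  unfold Matrix.IsHermitian
  rw [conjTranspose_smul, conjTranspose_one]
  norm_num

end Mult

section Main
open Matrix
variable {n : ℕ}

/-- λmin(D(t)) ≤ λmin(A) in the hard case -/
lemma borderD_lamMin_le (hn : 1 ≤ n) (A : Matrix (Fin n) (Fin n) ℝ) (hA : A.IsHermitian)
    (a : Fin n → ℝ)
    (hhard : ∀ v : Fin n → ℝ, A.mulVec v = lambdaMin A • v → a ⬝ᵥ v = 0) (t : ℝ) :
    lambdaMin (borderD A a t) ≤ lambdaMin A := by
  have hNe : Nonempty (Fin n) := ⟨⟨0, hn⟩⟩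
  obtain ⟨v0, hv0, hAv0⟩ := lambdaMin_mem hA
  have hV : ((extR n) v0 : Unit ⊕ Fin n → ℝ) ≠ 0 := by
    intro h
    apply hv0
    funext j
    exact congrFun h (Sum.inr j)
  apply lambdaMin_le (borderD_herm A a t hA) hV
  rw [borderD_eig_iff]
  constructor
  · have ha0 : a ⬝ᵥ (fun j => (extR n) v0 (Sum.inr j)) = 0 := hhard v0 hAv0
    rw [ha0]
    simp [extR]
  · have : (fun j => (extR n) v0 (Sum.inr j)) = v0 := rfl
    rw [this, hAv0]
    funext j
    simp [extR]

/-- λmin(D(t)) < λmin(A) for t < t0, via the Rayleigh quotient of (1, w) -/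
lemma borderD_lamMin_lt (hn : 1 ≤ n) (A : Matrix (Fin n) (Fin n) ℝ) (hA : A.IsHermitian)
    (a : Fin n → ℝ) (w : Fin n → ℝ)
    (hw : (A - lambdaMin A • (1 : Matrix (Fin n) (Fin n) ℝ)).mulVec w = a)
    {t : ℝ} (ht : t < lambdaMin A + a ⬝ᵥ w) :
    lambdaMin (borderD A a t) < lambdaMin A := by
  have hNe : Nonempty (Fin n) := ⟨⟨0, hn⟩⟩
  set lam := lambdaMin A with hlam
  have hAw : A *ᵥ w = a + lam • w := by
    rw [sub_mulVec, smul_mulVec, one_mulVec] at hw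
    funext j
    have := congrFun hw j
    simp only [Pi.sub_apply, Pi.add_apply, Pi.smul_apply, smul_eq_mul] at this ⊢
    linarith
  set V : Unit ⊕ Fin n → ℝ := Sum.elim (fun _ => (1:ℝ)) w with hV
  have hVV : V ⬝ᵥ V = 1 + w ⬝ᵥ w := by
    simp [dotProduct, Fintype.sum_sum_type, hV]
  have hray := lambdaMin_rayleigh (borderD_herm A a t hA) V
  have hDV : V ⬝ᵥ (borderD A a t *ᵥ V) = t - a ⬝ᵥ w + lam * (w ⬝ᵥ w) := by
    rw [dotProduct]
    rw [Fintype.sum_sum_type]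
    have hinl : ∀ z : Unit, V (Sum.inl z) * (borderD A a t *ᵥ V) (Sum.inl z)
        = t - a ⬝ᵥ w := by
      intro z
      rw [borderD_mulVec_inl]
      have : (fun j => V (Sum.inr j)) = w := rfl
      rw [this]
      simp [hV]
    have hinr : ∀ i : Fin n, V (Sum.inr i) * (borderD A a t *ᵥ V) (Sum.inr i)
        = w i * (-(a i) + (a i + lam * w i)) := by
      intro i
      rw [borderD_mulVec_inr]
      have h2 : (fun j => V (Sum.inr j)) = w := rfl
      rw [h2, hAw]
      simp [hV]
    rw [Finset.sum_congr rfl (fun z _ => hinl z), Finset.sum_congr rfl (fun i _ => hinr i)]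
    simp [Finset.mul_sum, dotProduct, Finset.sum_add_distrib]
    ring_nf
    exact Finset.sum_congr rfl fun i _ => by ring
  rw [hVV, hDV] at hray
  have hw2 : 0 ≤ w ⬝ᵥ w := by
    rw [dotProduct]
    exact Finset.sum_nonneg fun i _ => mul_self_nonneg _
  have : lambdaMin (borderD A a t) * (1 + w ⬝ᵥ w) < lam * (1 + w ⬝ᵥ w) := by
    have : lam * (1 + w ⬝ᵥ w) = lam + lam * (w ⬝ᵥ w) := by ring
    rw [this]
    linarith
  exact lt_of_mul_lt_mul_right this (by linarith)

end Main

section Mult2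
open Matrix
variable {n : ℕ}

/-- simple eigenvalue when λmin(D) < λmin(A) -/
lemma borderD_mult_one (hn : 1 ≤ n) (A : Matrix (Fin n) (Fin n) ℝ) (hA : A.IsHermitian)
    (a : Fin n → ℝ) (t : ℝ) (hlt : lambdaMin (borderD A a t) < lambdaMin A) :
    Module.finrank ℝ (LinearMap.ker
      (borderD A a t - lambdaMin (borderD A a t) • (1 : Matrix (Unit ⊕ Fin n) (Unit ⊕ Fin n) ℝ)).mulVecLin) = 1 := by
  have hNe : Nonempty (Fin n) := ⟨⟨0, hn⟩⟩
  set μ := lambdaMin (borderD A a t) with hμ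
  set K := LinearMap.ker (borderD A a t - μ • (1 : Matrix (Unit ⊕ Fin n) (Unit ⊕ Fin n) ℝ)).mulVecLin with hK
  have hzero : ∀ V ∈ K, V (Sum.inl ()) = 0 → V = 0 := by
    intro V hVm hV1
    have hVe := (mem_ker_iff _ _ _).mp hVm
    obtain ⟨h1, h2⟩ := (borderD_eig_iff A a t μ V).mp hVe
    have hAx : A *ᵥ (fun j => V (Sum.inr j)) = μ • (fun j => V (Sum.inr j)) := by
      rw [h2, hV1]
      simp
    have hx0 : (fun j => V (Sum.inr j)) = 0 := by
      by_contra hx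
      exact absurd (lambdaMin_le hA hx hAx) (not_le.mpr hlt)
    funext z
    rcases z with z | i
    · cases z; exact hV1
    · exact congrFun hx0 i
  have hle : Module.finrank ℝ K ≤ 1 := by
    have hinj : Function.Injective
        ((LinearMap.proj (R := ℝ) (φ := fun _ : Unit ⊕ Fin n => ℝ) (Sum.inl ())).comp K.subtype) := by
      intro U W hUW
      apply Subtype.ext
      have hd : (U : Unit ⊕ Fin n → ℝ) - W ∈ K := K.sub_mem U.2 W.2
      have h0 : ((U : Unit ⊕ Fin n → ℝ) - W) (Sum.inl ()) = 0 := by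
        simp only [Pi.sub_apply]
        have : (U : Unit ⊕ Fin n → ℝ) (Sum.inl ()) = (W : Unit ⊕ Fin n → ℝ) (Sum.inl ()) := by
          simpa using congrArg id hUW
        linarith
      have := hzero _ hd h0
      exact sub_eq_zero.mp this
    calc Module.finrank ℝ K ≤ Module.finrank ℝ ℝ :=
          LinearMap.finrank_le_finrank_of_injective hinj
      _ = 1 := Module.finrank_self ℝ
  have hpos : Module.finrank ℝ K ≠ 0 := by
    obtain ⟨V, hV, hVe⟩ := lambdaMin_mem (borderD_herm A a t hA)
    intro h0
    rw [Submodule.finrank_eq_zero] at h0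
    have : V ∈ K := (mem_ker_iff _ _ _).mpr hVe
    rw [h0] at this
    exact hV (Submodule.mem_bot ℝ |>.mp this)
  omega

end Mult2

section Mult3
open Matrix
variable {n : ℕ}

/-- the scalar component of any λmin(A)-eigenvector of D(t) satisfies s(t-t0)=0 -/
lemma borderD_s_eq (A : Matrix (Fin n) (Fin n) ℝ) (hA : A.IsHermitian) (a : Fin n → ℝ)
    (w : Fin n → ℝ) (hw : (A - lambdaMin A • (1 : Matrix (Fin n) (Fin n) ℝ)).mulVec w = a)
    (t : ℝ) (V : Unit ⊕ Fin n → ℝ) (hVe : borderD A a t *ᵥ V = lambdaMin A • V) :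
    V (Sum.inl ()) * (t - (lambdaMin A + a ⬝ᵥ w)) = 0 := by
  set lam := lambdaMin A with hlam
  obtain ⟨h1, h2⟩ := (borderD_eig_iff A a t lam V).mp hVe
  set s := V (Sum.inl ()) with hs
  set x : Fin n → ℝ := fun j => V (Sum.inr j) with hx
  have hsub : (A - lam • (1 : Matrix (Fin n) (Fin n) ℝ)) *ᵥ x = s • a := by
    rw [sub_mulVec, smul_mulVec, one_mulVec, h2]
    funext j
    simp only [Pi.sub_apply, Pi.add_apply, Pi.smul_apply, smul_eq_mul]
    ring
  have hax : a ⬝ᵥ x = s * (a ⬝ᵥ w) := by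
    calc a ⬝ᵥ x = ((A - lam • (1 : Matrix (Fin n) (Fin n) ℝ)) *ᵥ w) ⬝ᵥ x := by rw [hw]
      _ = w ⬝ᵥ ((A - lam • (1 : Matrix (Fin n) (Fin n) ℝ)) *ᵥ x) :=
          herm_dot (sub_smul_one_herm hA lam) w x
      _ = w ⬝ᵥ (s • a) := by rw [hsub]
      _ = s * (a ⬝ᵥ w) := by rw [dotProduct_smul, smul_eq_mul, dotProduct_comm]
  rw [hax] at h1
  linear_combination h1

lemma borderD_finrank_ne (A : Matrix (Fin n) (Fin n) ℝ) (hA : A.IsHermitian) (a : Fin n → ℝ)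
    (hhard : ∀ v : Fin n → ℝ, A.mulVec v = lambdaMin A • v → a ⬝ᵥ v = 0)
    (w : Fin n → ℝ) (hw : (A - lambdaMin A • (1 : Matrix (Fin n) (Fin n) ℝ)).mulVec w = a)
    (t : ℝ) (hts : t ≠ lambdaMin A + a ⬝ᵥ w) :
    Module.finrank ℝ (LinearMap.ker
        (borderD A a t - lambdaMin A • (1 : Matrix (Unit ⊕ Fin n) (Unit ⊕ Fin n) ℝ)).mulVecLin)
      = Module.finrank ℝ (LinearMap.ker
        (A - lambdaMin A • (1 : Matrix (Fin n) (Fin n) ℝ)).mulVecLin) := by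
  set lam := lambdaMin A with hlam
  set KD := LinearMap.ker
    (borderD A a t - lam • (1 : Matrix (Unit ⊕ Fin n) (Unit ⊕ Fin n) ℝ)).mulVecLin with hKD
  set KA := LinearMap.ker (A - lam • (1 : Matrix (Fin n) (Fin n) ℝ)).mulVecLin with hKA
  have hs0 : ∀ V ∈ KD, V (Sum.inl ()) = 0 := by
    intro V hVm
    have hVe := (mem_ker_iff _ _ _).mp hVm
    have := borderD_s_eq A hA a w hw t V hVe
    rcases mul_eq_zero.mp this with h | h
    · exact h
    · exact absurd (by linarith [sub_eq_zero.mp h] : t = lam + a ⬝ᵥ w) hts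
  have pf1 : ∀ V : KD, (LinearMap.funLeft ℝ ℝ Sum.inr) (V : Unit ⊕ Fin n → ℝ) ∈ KA := by
    intro V
    have hVe := (mem_ker_iff _ _ _).mp V.2
    obtain ⟨h1, h2⟩ := (borderD_eig_iff A a t lam _).mp hVe
    rw [mem_ker_iff]
    show A *ᵥ (fun j => (V : Unit ⊕ Fin n → ℝ) (Sum.inr j)) = lam • _
    rw [h2, hs0 _ V.2]
    funext j
    simp
  have pf2 : ∀ z : KA, (extR n) (z : Fin n → ℝ) ∈ KD := by
    intro z
    have hze := (mem_ker_iff _ _ _).mp z.2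
    rw [mem_ker_iff, borderD_eig_iff]
    have hz' : (fun j => (extR n) (z : Fin n → ℝ) (Sum.inr j)) = (z : Fin n → ℝ) := rfl
    constructor
    · rw [hz', hhard _ hze]
      simp [extR]
    · rw [hz', hze]
      funext j
      simp [extR]
  let f : KD →ₗ[ℝ] KA :=
    ((LinearMap.funLeft ℝ ℝ Sum.inr).comp KD.subtype).codRestrict KA pf1
  let g : KA →ₗ[ℝ] KD := ((extR n).comp KA.subtype).codRestrict KD pf2
  let equiv : KD ≃ₗ[ℝ] KA := by
    refine LinearEquiv.ofLinear f g ?_ ?_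
    · apply LinearMap.ext
      intro z
      apply Subtype.ext
      rfl
    · apply LinearMap.ext
      intro V
      apply Subtype.ext
      funext z
      rcases z with z | i
      · cases z
        show (0 : ℝ) = (V : Unit ⊕ Fin n → ℝ) (Sum.inl ())
        exact (hs0 _ V.2).symm
      · rfl
  exact equiv.finrank_eq

lemma borderD_finrank_t0 (A : Matrix (Fin n) (Fin n) ℝ) (hA : A.IsHermitian) (a : Fin n → ℝ)
    (hhard : ∀ v : Fin n → ℝ, A.mulVec v = lambdaMin A • v → a ⬝ᵥ v = 0)
    (w : Fin n → ℝ) (hw : (A - lambdaMin A • (1 : Matrix (Fin n) (Fin n) ℝ)).mulVec w = a) :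
    Module.finrank ℝ (LinearMap.ker
        (borderD A a (lambdaMin A + a ⬝ᵥ w)
          - lambdaMin A • (1 : Matrix (Unit ⊕ Fin n) (Unit ⊕ Fin n) ℝ)).mulVecLin)
      = Module.finrank ℝ (LinearMap.ker
        (A - lambdaMin A • (1 : Matrix (Fin n) (Fin n) ℝ)).mulVecLin) + 1 := by
  set lam := lambdaMin A with hlam
  set t := lam + a ⬝ᵥ w with htdef
  set KD := LinearMap.ker
    (borderD A a t - lam • (1 : Matrix (Unit ⊕ Fin n) (Unit ⊕ Fin n) ℝ)).mulVecLin with hKD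
  set KA := LinearMap.ker (A - lam • (1 : Matrix (Fin n) (Fin n) ℝ)).mulVecLin with hKA
  have hAw : A *ᵥ w = a + lam • w := by
    rw [sub_mulVec, smul_mulVec, one_mulVec] at hw
    funext j
    have := congrFun hw j
    simp only [Pi.sub_apply, Pi.add_apply, Pi.smul_apply, smul_eq_mul] at this ⊢
    linarith
  have pf3 : ∀ V : KD, (subW n w) (V : Unit ⊕ Fin n → ℝ) ∈ KA := by
    intro V
    have hVe := (mem_ker_iff _ _ _).mp V.2
    obtain ⟨h1, h2⟩ := (borderD_eig_iff A a t lam _).mp hVe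
    rw [mem_ker_iff]
    show A *ᵥ ((fun j => (V : Unit ⊕ Fin n → ℝ) (Sum.inr j))
        - (V : Unit ⊕ Fin n → ℝ) (Sum.inl ()) • w) = lam • _
    rw [mulVec_sub, mulVec_smul, h2, hAw]
    funext j
    simp only [Pi.sub_apply, Pi.add_apply, Pi.smul_apply, smul_eq_mul, subW,
      LinearMap.coe_mk, AddHom.coe_mk]
    ring
  have pf4 : ∀ p : ℝ × KA, (addW n w) (p.1, (p.2 : Fin n → ℝ)) ∈ KD := by
    intro p
    have hze := (mem_ker_iff _ _ _).mp p.2.2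
    rw [mem_ker_iff, borderD_eig_iff]
    have hz' : (fun j => (addW n w) (p.1, (p.2 : Fin n → ℝ)) (Sum.inr j))
        = p.1 • w + (p.2 : Fin n → ℝ) := rfl
    have hz1 : (addW n w) (p.1, (p.2 : Fin n → ℝ)) (Sum.inl ()) = p.1 := rfl
    have haz : a ⬝ᵥ (p.2 : Fin n → ℝ) = 0 := hhard _ hze
    constructor
    · rw [hz', hz1, dotProduct_add, dotProduct_smul, haz]
      simp only [smul_eq_mul, add_zero, htdef]
      ring
    · rw [hz', hz1, mulVec_add, mulVec_smul, hAw, hze]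
      funext j
      simp only [Pi.add_apply, Pi.smul_apply, smul_eq_mul]
      ring
  let f : KD →ₗ[ℝ] ℝ × KA :=
    LinearMap.prod
      ((LinearMap.proj (R := ℝ) (φ := fun _ : Unit ⊕ Fin n => ℝ) (Sum.inl ())).comp KD.subtype)
      (((subW n w).comp KD.subtype).codRestrict KA pf3)
  let g : ℝ × KA →ₗ[ℝ] KD :=
    ((addW n w).comp ((LinearMap.id (R := ℝ) (M := ℝ)).prodMap KA.subtype)).codRestrict KD
      (fun p => pf4 p)
  let equiv : KD ≃ₗ[ℝ] ℝ × KA := by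
    refine LinearEquiv.ofLinear f g ?_ ?_
    · apply LinearMap.ext
      intro p
      apply Prod.ext
      · rfl
      · apply Subtype.ext
        show (fun j => (addW n w) (p.1, (p.2 : Fin n → ℝ)) (Sum.inr j))
            - (addW n w) (p.1, (p.2 : Fin n → ℝ)) (Sum.inl ()) • w = (p.2 : Fin n → ℝ)
        funext j
        simp only [Pi.sub_apply, Pi.smul_apply, smul_eq_mul, addW]
        show p.1 * w j + (p.2 : Fin n → ℝ) j - p.1 * w j = _
        ring
    · apply LinearMap.ext
      intro V
      apply Subtype.ext
      funext z
      rcases z with z | i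
      · cases z; rfl
      · show (V : Unit ⊕ Fin n → ℝ) (Sum.inl ()) * w i
            + ((V : Unit ⊕ Fin n → ℝ) (Sum.inr i) - (V : Unit ⊕ Fin n → ℝ) (Sum.inl ()) * w i)
            = (V : Unit ⊕ Fin n → ℝ) (Sum.inr i)
        ring
  rw [equiv.finrank_eq, Module.finrank_prod, Module.finrank_self]
  omega

end Mult3


/-- Hard case of Theorem 1 (Rendl–Wolkowicz).
Here `w` is any solution of (A − λmin(A)·I)w = a, so that
t0 = λmin(A) + aᵀ(A − λmin(A)·I)†a = λmin(A) + aᵀw (in the hard case aᵀw is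
independent of the choice of solution w). -/
theorem stmt1 {n : ℕ} (hn : 1 ≤ n) (A : Matrix (Fin n) (Fin n) ℝ) (hA : A.IsHermitian)
    (a : Fin n → ℝ) (Δ : ℝ) (hΔ : 0 < Δ)
    (hhard : ∀ v : Fin n → ℝ, A.mulVec v = lambdaMin A • v → a ⬝ᵥ v = 0)
    (w : Fin n → ℝ) (hw : (A - lambdaMin A • (1 : Matrix (Fin n) (Fin n) ℝ)).mulVec w = a)
    (t0 : ℝ) (ht0 : t0 = lambdaMin A + a ⬝ᵥ w) :
    (∀ t : ℝ, t < t0 →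
        lambdaMin (borderD A a t) < lambdaMin A ∧ eigMult (borderD A a t) = 1) ∧
    (lambdaMin (borderD A a t0) = lambdaMin A ∧
        eigMult (borderD A a t0) = eigMult A + 1) ∧
    (∀ t : ℝ, t0 < t →
        lambdaMin (borderD A a t) = lambdaMin A ∧ eigMult (borderD A a t) = eigMult A) := by
  have hNe : Nonempty (Fin n) := ⟨⟨0, hn⟩⟩
  have hle := borderD_lamMin_le hn A hA a hhard
  have hgeq : ∀ t : ℝ, t0 ≤ t → lambdaMin (borderD A a t) = lambdaMin A := by
    intro t htt
    refine le_antisymm (hle t) ?_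
    by_contra hcon
    push_neg at hcon
    obtain ⟨V, hV, hVe⟩ := lambdaMin_mem (borderD_herm A a t hA)
    have hlt := eig_below_forces_t_lt hn A hA a hhard w hw hV hVe hcon
    rw [← ht0] at hlt
    linarith
  refine ⟨?_, ⟨hgeq t0 le_rfl, ?_⟩, ?_⟩
  · intro t htlt
    have h1 : lambdaMin (borderD A a t) < lambdaMin A :=
      borderD_lamMin_lt hn A hA a w hw (by rw [← ht0]; exact htlt)
    refine ⟨h1, ?_⟩
    unfold eigMult
    exact borderD_mult_one hn A hA a t h1
  · unfold eigMult
    rw [hgeq t0 le_rfl]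
    rw [ht0]
    exact borderD_finrank_t0 A hA a hhard w hw
  · intro t htgt
    refine ⟨hgeq t htgt.le, ?_⟩
    unfold eigMult
    rw [hgeq t htgt.le]
    exact borderD_finrank_ne A hA a hhard w hw t (by rw [← ht0]; exact (ne_of_gt htgt))
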